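/- Let h be a Lie subalgebra of the Lie algebra of n×n complex matrices (commutator bracket), and let π be a ℂ-linear endomorphism of the space of n×n matrices such that: (i) π(x) = x for every x ∈ h; (ii) π(η) ∈ h for every η; (iii) tr((η − π(η))·y) = 0 for every η and every y ∈ h; and (iv) π(θ) = 0 whenever tr(θ·y) = 0 for all y ∈ h (so π is the orthogonal projection onto h with respect to the trace form). Let φ : h → Matrix (Fin n) (Fin n) ℂ be a Lie algebra homomorphism (ℂ-linear with φ(⁅a,b⁆) = ⁅φ(a), φ(b)⁆), and set γ(η) := φ(π(η)). Then for every ξ ∈ h and every n×n matrix η: γ(exp(ξ)·η·exp(−ξ)) = exp(φ(ξ))·γ(η)·exp(−φ(ξ)). (This is the identity γ(Ad_X η) = Ad_{𝜸(X)} γ(η) for X = exp(ξ).) -/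

import Mathlib

open Matrix

noncomputable section

attribute [local instance 100] LieRing.ofAssociativeRing

namespace GammaAdAux

open NormedSpace

attribute [local instance] Matrix.linftyOpSemiNormedRing Matrix.linftyOpNormedRing
  Matrix.linftyOpNormedAlgebra

variable {n : ℕ}

local notation "M" => Matrix (Fin n) (Fin n) ℂ

instance instNormedRingCLM : NormedRing (M →L[ℂ] M) := ContinuousLinearMap.toNormedRing

instance instNormedAlgebraCLM : NormedAlgebra ℂ (M →L[ℂ] M) := ContinuousLinearMap.toNormedAlgebra

instance instIsTopologicalRingCLM : IsTopologicalRing (M →L[ℂ] M) :=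
  NonUnitalSeminormedRing.toIsTopologicalRing

instance instCompleteCLM :
    @CompleteSpace (M →L[ℂ] M) (instNormedRingCLM (n := n)).toUniformSpace := by
  haveI : SequentialSpace M := inferInstanceAs (SequentialSpace (Fin n → Fin n → ℂ))
  exact (ContinuousLinearMap.instCompleteSpace : CompleteSpace (M →L[ℂ] M))

instance instNormedAlgebraRatCLM : NormedAlgebra ℚ (M →L[ℂ] M) := .restrictScalars ℚ ℂ _

/-- left multiplication as a CLM -/
def lmul (x : M) : M →L[ℂ] M := ContinuousLinearMap.mul ℂ M x

/-- right multiplication as a CLM -/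
def rmul (x : M) : M →L[ℂ] M := (ContinuousLinearMap.mul ℂ M).flip x

@[simp] lemma lmul_apply (x y : M) : lmul x y = x * y := rfl
@[simp] lemma rmul_apply (x y : M) : rmul x y = y * x := rfl

lemma commute_lmul_rmul (x : M) : Commute (lmul x) (rmul x) := by
  apply ContinuousLinearMap.ext
  intro y
  simp [ContinuousLinearMap.mul_apply', mul_assoc, Commute, SemiconjBy]

variable [NeZero n]

/-- left multiplication as a ring hom into CLMs -/
def lmulRingHom : M →+* (M →L[ℂ] M) where
  toFun := lmul
  map_one' := by ext y; simp
  map_mul' a b := by ext y; simp [mul_assoc]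
  map_zero' := by ext y; simp
  map_add' a b := by ext y; simp [add_mul]

/-- right multiplication as a ring hom from the opposite ring into CLMs -/
def rmulRingHom : Mᵐᵒᵖ →+* (M →L[ℂ] M) where
  toFun a := rmul a.unop
  map_one' := by ext y; simp
  map_mul' a b := by ext y; simp [mul_assoc]
  map_zero' := by ext y; simp
  map_add' a b := by ext y; simp [mul_add]

lemma exp_lmul (x : M) : exp (lmul x) = lmul (exp x) := by
  have := map_exp (lmulRingHom (n := n))
    ((ContinuousLinearMap.mul ℂ M).continuous) x
  exact this.symm

lemma exp_rmul (x : M) : exp (rmul x) = rmul (exp x) := by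
  have hc : Continuous (rmulRingHom (n := n)) := by
    have : Continuous fun a : Mᵐᵒᵖ => ((ContinuousLinearMap.mul ℂ M).flip) a.unop :=
      ((ContinuousLinearMap.mul ℂ M).flip.continuous).comp MulOpposite.continuous_unop
    exact this
  have := map_exp (rmulRingHom (n := n)) hc (MulOpposite.op x)
  rw [exp_op] at this
  exact this.symm

set_option maxHeartbeats 1000000 in
lemma conj_exp (x η : M) :
    exp x * η * exp (-x) = exp (lmul x - rmul x) η := by
  have hc : Commute (lmul x) (-(rmul x)) := (commute_lmul_rmul x).neg_right
  have hrneg : -(rmul x) = rmul (-x) := by ext y; simp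
  have key0 : exp (lmul x + -(rmul x)) = exp (lmul x) * exp (-(rmul x)) :=
    exp_add_of_commute (𝔸 := M →L[ℂ] M) hc
  have key : exp (lmul x - rmul x) = lmul (exp x) * rmul (exp (-x)) := by
    rw [sub_eq_add_neg, key0, hrneg, exp_lmul, exp_rmul]
  rw [key]
  simp [ContinuousLinearMap.mul_apply, mul_assoc]

lemma exp_comm (γ T T' : M →L[ℂ] M) (hI : ∀ μ, γ (T μ) = T' (γ μ)) (η : M) :
    γ (exp T η) = exp T' (γ η) := by
  have hk : ∀ (k : ℕ) (μ : M), γ ((T ^ k) μ) = (T' ^ k) (γ μ) := by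
    intro k
    induction k with
    | zero => intro μ; simp
    | succ k ih =>
      intro μ
      rw [pow_succ, pow_succ]
      simp only [ContinuousLinearMap.mul_apply]
      rw [ih (T μ), hI μ]
  have hs : Summable fun k : ℕ => ((Nat.factorial k : ℂ))⁻¹ • T ^ k := expSeries_summable' T
  have hs' : Summable fun k : ℕ => ((Nat.factorial k : ℂ))⁻¹ • T' ^ k := expSeries_summable' T'
  have eT : exp T = ∑' k : ℕ, ((Nat.factorial k : ℂ))⁻¹ • T ^ k := by
    rw [exp_eq_tsum ℂ]
  have eT' : exp T' = ∑' k : ℕ, ((Nat.factorial k : ℂ))⁻¹ • T' ^ k := by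
    rw [exp_eq_tsum ℂ]
  have h1 : (∑' k : ℕ, ((Nat.factorial k : ℂ))⁻¹ • T ^ k) η
      = ∑' k : ℕ, (((Nat.factorial k : ℂ))⁻¹ • T ^ k) η :=
    (ContinuousLinearMap.apply ℂ M η).map_tsum hs
  have hs2 : Summable fun k : ℕ => (((Nat.factorial k : ℂ))⁻¹ • T ^ k) η :=
    hs.map (ContinuousLinearMap.apply ℂ M η)
      (ContinuousLinearMap.apply ℂ M η).continuous
  have h2 : (∑' k : ℕ, ((Nat.factorial k : ℂ))⁻¹ • T' ^ k) (γ η)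
      = ∑' k : ℕ, (((Nat.factorial k : ℂ))⁻¹ • T' ^ k) (γ η) :=
    (ContinuousLinearMap.apply ℂ M (γ η)).map_tsum hs'
  rw [eT, eT', h1, γ.map_tsum hs2, h2]
  congr 1
  funext k
  simp only [ContinuousLinearMap.smul_apply, _root_.map_smul]
  rw [hk]

theorem main
    (h : LieSubalgebra ℂ (Matrix (Fin n) (Fin n) ℂ))
    (π : Matrix (Fin n) (Fin n) ℂ →ₗ[ℂ] Matrix (Fin n) (Fin n) ℂ)
    (hπ₁ : ∀ x ∈ h, π x = x)
    (hπ₂ : ∀ η : Matrix (Fin n) (Fin n) ℂ, π η ∈ h)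
    (hπ₃ : ∀ η : Matrix (Fin n) (Fin n) ℂ, ∀ y ∈ h, Matrix.trace ((η - π η) * y) = 0)
    (hπ₄ : ∀ θ : Matrix (Fin n) (Fin n) ℂ,
      (∀ y ∈ h, Matrix.trace (θ * y) = 0) → π θ = 0)
    (φ : h →ₗ⁅ℂ⁆ Matrix (Fin n) (Fin n) ℂ)
    (ξ : h) (η : Matrix (Fin n) (Fin n) ℂ) :
      φ ⟨π (NormedSpace.exp (ξ : Matrix (Fin n) (Fin n) ℂ) * η *
            NormedSpace.exp (-(ξ : Matrix (Fin n) (Fin n) ℂ))), hπ₂ _⟩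
        = NormedSpace.exp (φ ξ) * φ ⟨π η, hπ₂ η⟩ * NormedSpace.exp (-(φ ξ)) := by
  -- the linear map γ
  let γlin : M →ₗ[ℂ] M :=
    { toFun := fun μ => φ ⟨π μ, hπ₂ μ⟩
      map_add' := by
        intro a b
        have : (⟨π (a + b), hπ₂ _⟩ : h) = ⟨π a, hπ₂ a⟩ + ⟨π b, hπ₂ b⟩ :=
          Subtype.ext (map_add π a b)
        show φ ⟨π (a + b), hπ₂ _⟩ = φ ⟨π a, hπ₂ a⟩ + φ ⟨π b, hπ₂ b⟩
        rw [this, map_add]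
      map_smul' := by
        intro c a
        have : (⟨π (c • a), hπ₂ _⟩ : h) = c • (⟨π a, hπ₂ a⟩ : h) :=
          Subtype.ext (map_smul π c a)
        show φ ⟨π (c • a), hπ₂ _⟩ = c • φ ⟨π a, hπ₂ a⟩
        rw [this, map_smul] }
  let γ : M →L[ℂ] M := LinearMap.toContinuousLinearMap γlin
  -- the key intertwining relation
  have key : ∀ μ : M, γ ((lmul (ξ : M) - rmul (ξ : M)) μ)
      = (lmul (φ ξ) - rmul (φ ξ)) (γ μ) := by
    intro μ
    have hθ : ∀ y ∈ h, Matrix.trace ((μ - π μ) * y) = 0 := hπ₃ μ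
    have h1 : π ((ξ : M) * (μ - π μ) - (μ - π μ) * (ξ : M)) = 0 := by
      apply hπ₄
      intro y hy
      have e : ((ξ : M) * (μ - π μ) - (μ - π μ) * (ξ : M)) * y
          = (ξ : M) * ((μ - π μ) * y) - (μ - π μ) * ((ξ : M) * y) := by
        noncomm_ring
      rw [e, Matrix.trace_sub, Matrix.trace_mul_comm (ξ : M) ((μ - π μ) * y)]
      have e2 : (μ - π μ) * y * (ξ : M) = (μ - π μ) * (y * (ξ : M)) := by
        rw [mul_assoc]
      rw [e2, ← Matrix.trace_sub, ← mul_sub]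
      have hmem : y * (ξ : M) - (ξ : M) * y ∈ h := by
        have := h.lie_mem hy ξ.2
        rwa [Ring.lie_def] at this
      exact hθ _ hmem
    have h2 : π ((ξ : M) * π μ - π μ * (ξ : M)) = (ξ : M) * π μ - π μ * (ξ : M) := by
      apply hπ₁
      have := h.lie_mem ξ.2 (hπ₂ μ)
      rwa [Ring.lie_def] at this
    have hsplit : (ξ : M) * μ - μ * (ξ : M)
        = ((ξ : M) * π μ - π μ * (ξ : M)) + ((ξ : M) * (μ - π μ) - (μ - π μ) * (ξ : M)) := by
      noncomm_ring
    have hπbr : π ((ξ : M) * μ - μ * (ξ : M)) = (ξ : M) * π μ - π μ * (ξ : M) := by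
      rw [hsplit, map_add, h1, h2, add_zero]
    have hco : (⟨π ((ξ : M) * μ - μ * (ξ : M)), hπ₂ _⟩ : h) = ⁅ξ, (⟨π μ, hπ₂ μ⟩ : h)⁆ := by
      apply Subtype.ext
      show π ((ξ : M) * μ - μ * (ξ : M)) = _
      rw [hπbr]
      rfl
    have : γ ((ξ : M) * μ - μ * (ξ : M)) = φ ξ * γ μ - γ μ * φ ξ := by
      show φ ⟨π ((ξ : M) * μ - μ * (ξ : M)), hπ₂ _⟩ = _
      rw [hco, LieHom.map_lie, Ring.lie_def]
      rfl
    simpa using this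
  -- put everything together
  have lhs : NormedSpace.exp (ξ : M) * η * NormedSpace.exp (-(ξ : M))
      = NormedSpace.exp (lmul (ξ : M) - rmul (ξ : M)) η := conj_exp _ _
  have rhs : NormedSpace.exp (φ ξ) * γ η * NormedSpace.exp (-(φ ξ))
      = NormedSpace.exp (lmul (φ ξ) - rmul (φ ξ)) (γ η) := conj_exp _ _
  show γ (NormedSpace.exp (ξ : M) * η * NormedSpace.exp (-(ξ : M)))
      = NormedSpace.exp (φ ξ) * γ η * NormedSpace.exp (-(φ ξ))
  rw [lhs, rhs]
  exact exp_comm γ _ _ key η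

end GammaAdAux

/-- Let `π` be the orthogonal projection (w.r.t. the trace form) of `n×n` complex matrices onto a
Lie subalgebra `h`, let `φ : h → gl_n(ℂ)` be a Lie algebra homomorphism, and set
`γ(η) = φ(π(η))`. Then `γ(Ad_{exp ξ} η) = Ad_{exp (φ ξ)} (γ η)` for all `ξ ∈ h` and all `η`. -/
theorem gamma_ad_exp {n : ℕ}
    (h : LieSubalgebra ℂ (Matrix (Fin n) (Fin n) ℂ))
    (π : Matrix (Fin n) (Fin n) ℂ →ₗ[ℂ] Matrix (Fin n) (Fin n) ℂ)
    (hπ₁ : ∀ x ∈ h, π x = x)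
    (hπ₂ : ∀ η : Matrix (Fin n) (Fin n) ℂ, π η ∈ h)
    (hπ₃ : ∀ η : Matrix (Fin n) (Fin n) ℂ, ∀ y ∈ h, Matrix.trace ((η - π η) * y) = 0)
    (hπ₄ : ∀ θ : Matrix (Fin n) (Fin n) ℂ,
      (∀ y ∈ h, Matrix.trace (θ * y) = 0) → π θ = 0)
    (φ : h →ₗ⁅ℂ⁆ Matrix (Fin n) (Fin n) ℂ) :
    ∀ (ξ : h) (η : Matrix (Fin n) (Fin n) ℂ),
      φ ⟨π (NormedSpace.exp (ξ : Matrix (Fin n) (Fin n) ℂ) * η *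
            NormedSpace.exp (-(ξ : Matrix (Fin n) (Fin n) ℂ))), hπ₂ _⟩
        = NormedSpace.exp (φ ξ) * φ ⟨π η, hπ₂ η⟩ * NormedSpace.exp (-(φ ξ)) := by
  intro ξ η
  rcases Nat.eq_zero_or_pos n with hn | hn
  · subst hn
    haveI : Subsingleton (Matrix (Fin 0) (Fin 0) ℂ) :=
      ⟨fun a b => by ext i j; exact i.elim0⟩
    exact Subsingleton.elim _ _
  · haveI : NeZero n := ⟨hn.ne'⟩
    exact GammaAdAux.main h π hπ₁ hπ₂ hπ₃ hπ₄ φ ξ η
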